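/- Let n be a 4×4 upper unitriangular complex matrix (entries 1 on the diagonal, 0 below). Then there exist invertible lower triangular complex matrices l₁, l₂ with n = l₁ · w̄₀ · l₂, where w̄₀ is the 4×4 permutation matrix of the permutation i ↦ 5 − i, if and only if the three minors D_{1,4}(n) = n₁₄, D_{12,34}(n) = det [[n₁₃, n₁₄],[n₂₃, n₂₄]], and D_{123,234}(n) = det of the submatrix of n with rows {1,2,3} and columns {2,3,4} are all nonzero. -/

import Mathlib

/-- The permutation matrix of the longest element `w₀` of the Weyl group of `SL₄`,
i.e. of the permutation `i ↦ 5 - i` (on indices `1,…,4`). -/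
def w0bar : Matrix (Fin 4) (Fin 4) ℂ :=
  Matrix.of fun i j => if (i : ℕ) + (j : ℕ) = 3 then 1 else 0

set_option maxHeartbeats 800000 in
private theorem key_unipotent_SL4 (a b c d e f : ℂ) (hc : c ≠ 0)
    (h2 : c * d - b * e ≠ 0)
    (h3 : a * e - a * d * f + b * f - c ≠ 0) :
    !![1,a,b,c; 0,1,d,e; 0,0,1,f; 0,0,0,(1:ℂ)] =
      !![c,0,0,0; e,(c*d-b*e)/c,0,0;
         f,(c-b*f)/c, (a*e-a*d*f+b*f-c)/(c*d-b*e), 0;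
         1, -b/c, (b-a*d)/(c*d-b*e), 1/(a*e-a*d*f+b*f-c)] *
      !![0,0,0,1;0,0,1,0;0,1,0,0;(1:ℂ),0,0,0] *
      !![1,0,0,0;
         (e-d*f)/(a*e-a*d*f+b*f-c),1,0,0;
         -e/(c*d-b*e),(c-a*e)/(c*d-b*e),1,0;
         1/c,a/c,b/c,1] := by
  have h2' : d * c - e * b ≠ 0 := by intro h; apply h2; linear_combination h
  have h2'' : d * c - b * e ≠ 0 := by intro h; apply h2; linear_combination h
  have h3' : a * (e - d * f) + f * b - c ≠ 0 := by intro h; apply h3; linear_combination h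
  ext i j
  fin_cases i <;> fin_cases j <;>
    simp [Matrix.mul_apply, Fin.sum_univ_four, Matrix.vecHead, Matrix.vecTail] <;>
    field_simp <;> ring

set_option maxHeartbeats 800000 in
/-- A `4 × 4` upper unitriangular complex matrix lies in the Bruhat cell
`B₋ w₀ B₋` if and only if the three flag minors `D_{1,4}`, `D_{12,34}` and
`D_{123,234}` are nonzero. -/
theorem unipotent_cell_SL4 (n : Matrix (Fin 4) (Fin 4) ℂ)
    (hdiag : ∀ i : Fin 4, n i i = 1)
    (hlow : ∀ i j : Fin 4, j < i → n i j = 0) :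
    (∃ l₁ l₂ : Matrix (Fin 4) (Fin 4) ℂ,
        (∀ i j : Fin 4, i < j → l₁ i j = 0) ∧ IsUnit l₁ ∧
        (∀ i j : Fin 4, i < j → l₂ i j = 0) ∧ IsUnit l₂ ∧
        n = l₁ * w0bar * l₂) ↔
      (n 0 3 ≠ 0 ∧
       Matrix.det !![n 0 2, n 0 3; n 1 2, n 1 3] ≠ 0 ∧
       Matrix.det !![n 0 1, n 0 2, n 0 3; n 1 1, n 1 2, n 1 3; n 2 1, n 2 2, n 2 3] ≠ 0) := by
  constructor
  · rintro ⟨l₁, l₂, h1, hu1, h2, hu2, heq⟩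
    have hw : w0bar = !![0,0,0,1;0,0,1,0;0,1,0,0;1,0,0,0] := by
      ext i j; fin_cases i <;> fin_cases j <;>
        simp [w0bar, Matrix.vecHead, Matrix.vecTail] <;> decide
    have hl1 : l₁ = !![l₁ 0 0,0,0,0; l₁ 1 0, l₁ 1 1,0,0; l₁ 2 0,l₁ 2 1,l₁ 2 2,0;
        l₁ 3 0,l₁ 3 1,l₁ 3 2,l₁ 3 3] := by
      ext i j; fin_cases i <;> fin_cases j <;> simp <;> exact h1 _ _ (by decide)
    have hl2 : l₂ = !![l₂ 0 0,0,0,0; l₂ 1 0, l₂ 1 1,0,0; l₂ 2 0,l₂ 2 1,l₂ 2 2,0;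
        l₂ 3 0,l₂ 3 1,l₂ 3 2,l₂ 3 3] := by
      ext i j; fin_cases i <;> fin_cases j <;> simp <;> exact h2 _ _ (by decide)
    have hne1 : ∀ i, l₁ i i ≠ 0 := by
      have hd : l₁.det ≠ 0 := ((Matrix.isUnit_iff_isUnit_det l₁).mp hu1).ne_zero
      rw [Matrix.det_of_lowerTriangular l₁ (fun i j h => h1 i j (by simpa using h))] at hd
      exact fun i => Finset.prod_ne_zero_iff.mp hd i (Finset.mem_univ i)
    have hne2 : ∀ i, l₂ i i ≠ 0 := by
      have hd : l₂.det ≠ 0 := ((Matrix.isUnit_iff_isUnit_det l₂).mp hu2).ne_zero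
      rw [Matrix.det_of_lowerTriangular l₂ (fun i j h => h2 i j (by simpa using h))] at hd
      exact fun i => Finset.prod_ne_zero_iff.mp hd i (Finset.mem_univ i)
    have k1 : n 0 3 = l₁ 0 0 * l₂ 3 3 := by
      rw [heq, hl1, hl2, hw]
      simp [Matrix.mul_apply, Fin.sum_univ_four, Matrix.vecHead, Matrix.vecTail]
    have k2 : Matrix.det !![n 0 2, n 0 3; n 1 2, n 1 3] =
        -(l₁ 0 0 * l₁ 1 1 * l₂ 2 2 * l₂ 3 3) := by
      rw [Matrix.det_fin_two_of, heq, hl1, hl2, hw]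
      simp [Matrix.mul_apply, Fin.sum_univ_four, Matrix.vecHead, Matrix.vecTail]
      ring
    have k3 : Matrix.det !![n 0 1, n 0 2, n 0 3; n 1 1, n 1 2, n 1 3;
        n 2 1, n 2 2, n 2 3] =
        -(l₁ 0 0 * l₁ 1 1 * l₁ 2 2 * l₂ 1 1 * l₂ 2 2 * l₂ 3 3) := by
      rw [Matrix.det_fin_three, heq, hl1, hl2, hw]
      simp [Matrix.mul_apply, Fin.sum_univ_four, Matrix.vecHead, Matrix.vecTail]
      ring
    refine ⟨by rw [k1]; exact mul_ne_zero (hne1 0) (hne2 3), ?_, ?_⟩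
    · rw [k2]
      exact neg_ne_zero.mpr (mul_ne_zero (mul_ne_zero (mul_ne_zero (hne1 0) (hne1 1)) (hne2 2)) (hne2 3))
    · rw [k3]
      exact neg_ne_zero.mpr (mul_ne_zero (mul_ne_zero (mul_ne_zero (mul_ne_zero
        (mul_ne_zero (hne1 0) (hne1 1)) (hne1 2)) (hne2 1)) (hne2 2)) (hne2 3))
  · rintro ⟨hc, hm2, hm3⟩
    have hw : w0bar = !![0,0,0,1;0,0,1,0;0,1,0,0;1,0,0,0] := by
      ext i j; fin_cases i <;> fin_cases j <;>
        simp [w0bar, Matrix.vecHead, Matrix.vecTail] <;> decide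
    have hn : n = !![1, n 0 1, n 0 2, n 0 3; 0,1,n 1 2,n 1 3; 0,0,1,n 2 3; 0,0,0,1] := by
      ext i j; fin_cases i <;> fin_cases j <;> simp <;>
        first | exact hdiag _ | exact hlow _ _ (by decide)
    have h2 : n 0 3 * n 1 2 - n 0 2 * n 1 3 ≠ 0 := by
      intro h; apply hm2
      rw [Matrix.det_fin_two_of]; linear_combination -h
    have h3 : n 0 1 * n 1 3 - n 0 1 * n 1 2 * n 2 3 + n 0 2 * n 2 3 - n 0 3 ≠ 0 := by
      intro h; apply hm3
      rw [Matrix.det_fin_three]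
      simp [hdiag 1, hdiag 2, hlow 2 1 (by decide), Matrix.vecHead, Matrix.vecTail]
      linear_combination -h
    refine ⟨!![n 0 3,0,0,0;
               n 1 3,(n 0 3*n 1 2-n 0 2*n 1 3)/n 0 3,0,0;
               n 2 3,(n 0 3-n 0 2*n 2 3)/n 0 3,
                 (n 0 1*n 1 3-n 0 1*n 1 2*n 2 3+n 0 2*n 2 3-n 0 3)/(n 0 3*n 1 2-n 0 2*n 1 3), 0;
               1, -(n 0 2)/n 0 3, (n 0 2-n 0 1*n 1 2)/(n 0 3*n 1 2-n 0 2*n 1 3),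
                 1/(n 0 1*n 1 3-n 0 1*n 1 2*n 2 3+n 0 2*n 2 3-n 0 3)],
            !![1,0,0,0;
               (n 1 3-n 1 2*n 2 3)/(n 0 1*n 1 3-n 0 1*n 1 2*n 2 3+n 0 2*n 2 3-n 0 3),1,0,0;
               -(n 1 3)/(n 0 3*n 1 2-n 0 2*n 1 3),
                 (n 0 3-n 0 1*n 1 3)/(n 0 3*n 1 2-n 0 2*n 1 3),1,0;
               1/n 0 3, n 0 1/n 0 3, n 0 2/n 0 3, 1],
            ?_, ?_, ?_, ?_, ?_⟩
    · intro i j hij; fin_cases i <;> fin_cases j <;>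
        first | rfl | exact absurd hij (by decide)
    · rw [Matrix.isUnit_iff_isUnit_det,
        Matrix.det_of_lowerTriangular _
          (fun i j h => by fin_cases i <;> fin_cases j <;>
            first | rfl | exact absurd h (by decide))]
      rw [show IsUnit _ ↔ _ from isUnit_iff_ne_zero]
      simp only [Fin.prod_univ_four]
      simp [Matrix.vecHead, Matrix.vecTail]
      exact ⟨⟨⟨hc, h2, hc⟩, h3, h2⟩, h3⟩
    · intro i j hij; fin_cases i <;> fin_cases j <;>
        first | rfl | exact absurd hij (by decide)
    · rw [Matrix.isUnit_iff_isUnit_det,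
        Matrix.det_of_lowerTriangular _
          (fun i j h => by fin_cases i <;> fin_cases j <;>
            first | rfl | exact absurd h (by decide))]
      simp only [Fin.prod_univ_four]
      simp [Matrix.vecHead, Matrix.vecTail]
    · rw [hw]
      conv_lhs => rw [hn]
      exact key_unipotent_SL4 (n 0 1) (n 0 2) (n 0 3) (n 1 2) (n 1 3) (n 2 3) hc h2 h3
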